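/- There exists a time scale T, namely T = [0, 1/2] ∪ [3/4, 1], and a function u : T → ℝ (u(3/4) = 1 and u = 0 elsewhere) such that u satisfies the weakened finite-cover condition (without the clause 's,t ≥ τⱼ') for every ε > 0, yet u is not rd-continuous on T. -/

import Mathlib

open Set Filter

open Classical in
/-- Forward jump operator of a time scale. -/
noncomputable def tsSigma (T : Set ℝ) (t : ℝ) : ℝ :=
  if ({s | s ∈ T ∧ t < s}).Nonempty then sInf {s | s ∈ T ∧ t < s} else sSup T

open Classical in
/-- Backward jump operator of a time scale. -/
noncomputable def tsRho (T : Set ℝ) (t : ℝ) : ℝ :=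
  if ({s | s ∈ T ∧ s < t}).Nonempty then sSup {s | s ∈ T ∧ s < t} else sInf T

/-- `T^κ` : `T` minus a left-scattered maximum, if any. -/
def tsKappa (T : Set ℝ) : Set ℝ :=
  T \ {t | IsGreatest T t ∧ tsRho T t < t}

/-- `u` is Δ-differentiable at `t` with Δ-derivative `L`. -/
def IsDeltaDerivAt {E : Type*} [NormedAddCommGroup E] [NormedSpace ℝ E]
    (T : Set ℝ) (u : ℝ → E) (t : ℝ) (L : E) : Prop :=
  ∀ ε > (0:ℝ), ∃ δ > (0:ℝ), ∀ s ∈ T, |s - t| < δ →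
    ‖u (tsSigma T t) - u s - (tsSigma T t - s) • L‖ ≤ ε * |tsSigma T t - s|

/-- rd-continuity of `u` on the time scale `T`. -/
def RdContinuousOn {E : Type*} [NormedAddCommGroup E]
    (T : Set ℝ) (u : ℝ → E) : Prop :=
  (∀ t ∈ T, tsSigma T t = t → ContinuousWithinAt u T t) ∧
  (∀ t ∈ T, tsRho T t = t → ∃ L : E, Tendsto u (nhdsWithin t (T ∩ Iio t)) (nhds L))

/-- The time scale `[0,1/2] ∪ [3/4,1]`. -/
noncomputable def T9 : Set ℝ := Set.Icc 0 (1/2) ∪ Set.Icc (3/4) 1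

open Classical in
/-- The function with `u(3/4) = 1` and `u = 0` elsewhere. -/
noncomputable def u9 : ℝ → ℝ := fun t => if t = 3/4 then 1 else 0

open Topology

lemma sigma_half : tsSigma T9 (1/2) = 3/4 := by
  have hset : {s | s ∈ T9 ∧ (1:ℝ)/2 < s} = Set.Icc (3/4 : ℝ) 1 := by
    ext x
    simp only [T9, Set.mem_setOf_eq, Set.mem_union, Set.mem_Icc]
    constructor
    · rintro ⟨h1 | h1, h2⟩
      · linarith [h1.2]
      · exact h1
    · intro h; exact ⟨Or.inr h, by linarith [h.1]⟩
  rw [tsSigma, hset, if_pos ⟨(3/4 : ℝ), by norm_num⟩, csInf_Icc (by norm_num)]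

lemma sigma_34 : tsSigma T9 (3/4) = 3/4 := by
  have hset : {s | s ∈ T9 ∧ (3:ℝ)/4 < s} = Set.Ioc (3/4 : ℝ) 1 := by
    ext x
    simp only [T9, Set.mem_setOf_eq, Set.mem_union, Set.mem_Icc, Set.mem_Ioc]
    constructor
    · rintro ⟨h1 | h1, h2⟩
      · linarith [h1.2]
      · exact ⟨h2, h1.2⟩
    · intro h; exact ⟨Or.inr ⟨le_of_lt h.1, h.2⟩, h.1⟩
  rw [tsSigma, hset, if_pos ⟨(1 : ℝ), by norm_num⟩, csInf_Ioc (by norm_num)]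

lemma u9_eq_zero {x : ℝ} (h : x ≠ 3/4) : u9 x = 0 := if_neg h

theorem weakened_cover_not_rdContinuous' :
    (∀ ε > (0:ℝ), ∃ n : ℕ, ∃ τ : Fin (n+1) → ℝ, ∃ δ : Fin (n+1) → ℝ,
      (∀ i, τ i ∈ T9) ∧ StrictMono τ ∧
      τ 0 = 0 ∧ τ (Fin.last n) = 1 ∧ (∀ i, 0 < δ i) ∧
      (T9 ⊆ ⋃ i, Set.Ioo (τ i - δ i) (τ i + δ i)) ∧
      ∀ j : Fin (n+1),
        ∀ s ∈ T9 ∩ Set.Ioo (τ j - δ j) (τ j + δ j),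
        ∀ t ∈ T9 ∩ Set.Ioo (τ j - δ j) (τ j + δ j),
          (tsSigma T9 (τ j) = τ j ∨ (s < τ j ∧ t < τ j)) →
          |u9 s - u9 t| < ε) ∧
    ¬ RdContinuousOn T9 u9 := by
  constructor
  · intro ε hε
    refine ⟨3, ![0, 1/2, 17/20, 1], ![3/10, 3/10, 1/10, 1/10], ?_, ?_, ?_, ?_, ?_, ?_, ?_⟩
    · intro i
      fin_cases i <;> simp [T9] <;> norm_num
    · rw [Fin.strictMono_iff_lt_succ]
      intro i
      fin_cases i <;> norm_num [Matrix.cons_val_two]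
    · norm_num
    · norm_num [Fin.last]
    · intro i; fin_cases i <;> norm_num
    · intro x hx
      simp only [Set.mem_iUnion]
      rcases hx with hx | hx
      · rcases lt_or_ge x (3/10) with h | h
        · exact ⟨0, by simp [Set.mem_Ioo]; constructor <;> [linarith [hx.1]; linarith]⟩
        · exact ⟨1, by simp [Set.mem_Ioo]; constructor <;> [linarith; linarith [hx.2]]⟩
      · rcases lt_or_ge x (4/5) with h | h
        · exact ⟨1, by simp [Set.mem_Ioo]; constructor <;> [linarith [hx.1]; linarith]⟩
        · rcases lt_or_ge x (19/20) with h2 | h2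
          · exact ⟨2, by simp [Set.mem_Ioo]; constructor <;> [linarith; linarith]⟩
          · exact ⟨3, by simp [Set.mem_Ioo]; constructor <;> [linarith; linarith [hx.2]]⟩
    · intro j s hs t ht hyp
      have key : ∀ x : ℝ, x ≠ 3/4 → ∀ y : ℝ, y ≠ 3/4 → |u9 x - u9 y| < ε := by
        intro x hx y hy
        rw [u9_eq_zero hx, u9_eq_zero hy]
        simpa using hε
      fin_cases j
      · refine key s ?_ t ?_
        · have := hs.2.2; simp at this; intro h; rw [h] at this; norm_num at this
        · have := ht.2.2; simp at this; intro h; rw [h] at this; norm_num at this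
      · rcases hyp with h | ⟨h1, h2⟩
        · simp only [Fin.isValue, Fin.mk_one, Matrix.cons_val_one, Matrix.head_cons, Matrix.cons_val_zero] at h
          rw [sigma_half] at h; norm_num at h
        · simp only [Matrix.cons_val_one, Matrix.head_cons, Matrix.cons_val_zero] at h1 h2
          refine key s (by intro h; rw [h] at h1; norm_num at h1)
            t (by intro h; rw [h] at h2; norm_num at h2)
      · refine key s ?_ t ?_
        · have := hs.2.1; simp at this; intro h; rw [h] at this; norm_num at this
        · have := ht.2.1; simp at this; intro h; rw [h] at this; norm_num at this
      · refine key s ?_ t ?_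
        · have := hs.2.1; simp at this; intro h; rw [h] at this; norm_num at this
        · have := ht.2.1; simp at this; intro h; rw [h] at this; norm_num at this
  · rintro ⟨h1, _⟩
    have hmem : (3/4 : ℝ) ∈ T9 := Or.inr ⟨le_refl _, by norm_num⟩
    have hc : ContinuousWithinAt u9 T9 (3/4) := h1 (3/4) hmem sigma_34
    have hsub : Set.Ioo (3/4 : ℝ) 1 ⊆ T9 := fun x hx =>
      Or.inr ⟨le_of_lt hx.1, le_of_lt hx.2⟩
    have hne : (𝓝[Set.Ioo (3/4 : ℝ) 1] (3/4)).NeBot :=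
      left_nhdsWithin_Ioo_neBot (by norm_num)
    have ht1 : Tendsto u9 (𝓝[Set.Ioo (3/4 : ℝ) 1] (3/4)) (𝓝 (u9 (3/4))) :=
      hc.mono_left (nhdsWithin_mono _ hsub)
    have ht0 : Tendsto u9 (𝓝[Set.Ioo (3/4 : ℝ) 1] (3/4)) (𝓝 0) := by
      refine Tendsto.congr' ?_ tendsto_const_nhds
      filter_upwards [self_mem_nhdsWithin] with x hx
      exact (u9_eq_zero (ne_of_gt hx.1)).symm
    have : u9 (3/4) = 0 := tendsto_nhds_unique ht1 ht0
    rw [u9] at this; norm_num at this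

/-- `u9` satisfies the weakened finite-cover condition (without the
clause `s,t ≥ τⱼ`) on `T9`, yet it is not rd-continuous on `T9`. -/
theorem weakened_cover_not_rdContinuous :
    (∀ ε > (0:ℝ), ∃ n : ℕ, ∃ τ : Fin (n+1) → ℝ, ∃ δ : Fin (n+1) → ℝ,
      (∀ i, τ i ∈ T9) ∧ StrictMono τ ∧
      τ 0 = 0 ∧ τ (Fin.last n) = 1 ∧ (∀ i, 0 < δ i) ∧
      (T9 ⊆ ⋃ i, Set.Ioo (τ i - δ i) (τ i + δ i)) ∧
      ∀ j : Fin (n+1),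
        ∀ s ∈ T9 ∩ Set.Ioo (τ j - δ j) (τ j + δ j),
        ∀ t ∈ T9 ∩ Set.Ioo (τ j - δ j) (τ j + δ j),
          (tsSigma T9 (τ j) = τ j ∨ (s < τ j ∧ t < τ j)) →
          |u9 s - u9 t| < ε) ∧
    ¬ RdContinuousOn T9 u9 := by
  exact weakened_cover_not_rdContinuous'
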